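/- Let g : D → ℂ be holomorphic with g(0) = 0, g'(0) = 1, and suppose Re(g(z)/z) ≥ α for all z ∈ D ∖ {0}, where 0 ≤ α < 1. Then for every m ≥ 2, the Taylor coefficient c_m = g^{(m)}(0)/m! satisfies |c_m| ≤ 2(1-α). -/

import Mathlib

open Complex Metric intervalIntegral

private lemma exp_int_integral (j : ℤ) :
    (∫ θ in (0:ℝ)..(2*Real.pi), Complex.exp (j * θ * I)) =
      if j = 0 then (2*Real.pi : ℂ) else 0 := by
  rcases eq_or_ne j 0 with h | h
  · simp [h]
  · have hc : (j : ℂ) * I ≠ 0 := by simp [Complex.I_ne_zero, h]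
    have : ∀ θ : ℝ, (j:ℂ) * θ * I = (j * I) * θ := fun θ => by ring
    simp only [this]
    rw [integral_exp_mul_complex hc]
    have h2 : (j:ℂ) * I * (2*Real.pi) = j * (2 * Real.pi * I) := by ring
    simp [h2, Complex.exp_int_mul_two_pi_mul_I, h]

private lemma intervalIntegral_conj {f : ℝ → ℂ} {a b : ℝ} :
    (∫ x in a..b, (starRingEnd ℂ) (f x)) = (starRingEnd ℂ) (∫ x in a..b, f x) := by
  simp only [intervalIntegral, integral_conj, map_sub]

private lemma hasSum_J {g : ℂ → ℂ} {p : FormalMultilinearSeries ℂ ℂ ℂ} {r' : NNReal}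
    (hp : HasFPowerSeriesOnBall g p 0 r') {r : ℝ} (hr0 : 0 < r) (hrr' : r < r') (s : ℤ) :
    HasSum (fun k : ℕ => if (k:ℤ) = s then (2*Real.pi : ℂ) * (p.coeff k * r ^ k) else 0)
      (∫ θ in (0:ℝ)..(2*Real.pi), g ((r:ℂ) * Complex.exp (θ * I)) * Complex.exp (-s * θ * I)) := by
  have hmem : ∀ θ : ℝ, (r:ℂ) * Complex.exp (θ * I) ∈ Metric.eball (0:ℂ) r' := by
    intro θ
    rw [mem_emetric_ball_zero_iff]
    have : ‖(r:ℂ) * Complex.exp (θ * I)‖₊ < r' := by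
      rw [← NNReal.coe_lt_coe]
      simp [coe_nnnorm, Complex.norm_exp_ofReal_mul_I, abs_of_pos hr0]
      exact hrr'
    exact_mod_cast ENNReal.coe_lt_coe.2 this
  have key := intervalIntegral.hasSum_integral_of_dominated_convergence
    (μ := MeasureTheory.volume) (a := (0:ℝ)) (b := 2*Real.pi)
    (F := fun k θ => p.coeff k * ((r:ℂ) * Complex.exp (θ * I)) ^ k * Complex.exp (-s * θ * I))
    (f := fun θ => g ((r:ℂ) * Complex.exp (θ * I)) * Complex.exp (-s * θ * I))
    (bound := fun k _ => ‖p.coeff k‖ * r ^ k)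
    (fun k => by apply Continuous.aestronglyMeasurable; fun_prop)
    (fun k => MeasureTheory.ae_of_all _ fun θ _ => by
      simp [norm_mul, Complex.norm_exp_ofReal_mul_I, abs_of_pos hr0,
        mul_pow, Complex.norm_exp])
    (MeasureTheory.ae_of_all _ fun θ _ => by
      have : Summable fun k : ℕ => ‖p k‖ * r ^ k := by
        apply p.summable_norm_mul_pow (r := ⟨r, hr0.le⟩)
        exact lt_of_lt_of_le (ENNReal.coe_lt_coe.2 (show (⟨r, hr0.le⟩ : NNReal) < r' from NNReal.coe_lt_coe.1 hrr')) hp.r_le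
      simpa [FormalMultilinearSeries.norm_apply_eq_norm_coef] using this)
    (by apply _root_.intervalIntegrable_const)
    (MeasureTheory.ae_of_all _ fun θ _ => by
      have h1 := hp.hasSum (hmem θ)
      simp only [zero_add] at h1
      have h2 : (fun k : ℕ => p k fun _ => (r:ℂ) * Complex.exp (θ * I)) =
          fun k : ℕ => p.coeff k * ((r:ℂ) * Complex.exp (θ * I)) ^ k := by
        funext k
        rw [FormalMultilinearSeries.apply_eq_pow_smul_coeff, smul_eq_mul]; ring
      rw [h2] at h1
      exact h1.mul_right _)
  convert key using 1
  · rfl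
  funext k
  have h1 : ∀ θ : ℝ, p.coeff k * ((r:ℂ) * Complex.exp (θ * I)) ^ k * Complex.exp (-s * θ * I)
      = (p.coeff k * (r:ℝ) ^ k) * Complex.exp (((k : ℤ) - s : ℤ) * θ * I) := by
    intro θ
    rw [mul_pow, ← Complex.exp_nat_mul, ← mul_assoc]
    rw [mul_assoc _ (Complex.exp _) _, ← Complex.exp_add]
    push_cast; ring_nf
  simp only [h1]
  rw [intervalIntegral.integral_const_mul, exp_int_integral]
  by_cases h : (k:ℤ) = s
  · simp [h, sub_eq_zero.2 h]; ring
  · simp [h, sub_eq_zero, h]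

private lemma pointwise (w : ℂ) {r : ℝ} (hr : r ≠ 0) (α : ℝ) (θ : ℝ) (ν : ℕ) :
    (((w * Complex.exp (-θ*I) / r).re - α : ℝ) : ℂ) * Complex.exp (-(ν:ℂ)*θ*I)
    = (2*r:ℂ)⁻¹ * (w * Complex.exp (-(((ν+1:ℕ)):ℤ) * θ * I))
      + (2*r:ℂ)⁻¹ * (starRingEnd ℂ) (w * Complex.exp (-((1-(ν:ℤ))) * θ * I))
      + (-α:ℂ) * Complex.exp ((-(ν:ℤ)) * θ * I) := by
  have hexp : ∀ s : ℤ, Complex.exp ((s:ℂ) * θ * I) = Complex.exp (θ*I) ^ s := by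
    intro s; rw [mul_assoc, Complex.exp_int_mul]
  set E := Complex.exp (θ*I) with hE
  have hE0 : E ≠ 0 := Complex.exp_ne_zero _
  have hrC : (r:ℂ) ≠ 0 := Complex.ofReal_ne_zero.2 hr
  have hEc : (starRingEnd ℂ) E = E⁻¹ := by
    rw [hE, ← Complex.exp_conj, ← Complex.exp_neg]
    congr 1
    simp [Complex.conj_I, Complex.conj_ofReal]
  have h1 : Complex.exp (-(θ:ℂ)*I) = E⁻¹ := by
    rw [neg_mul, Complex.exp_neg]
  have h2 : Complex.exp (-(ν:ℂ)*θ*I) = (E ^ (ν:ℕ))⁻¹ := by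
    rw [show (-(ν:ℂ)*θ*I) = ((-(ν:ℤ) : ℤ) : ℂ) * θ * I by push_cast; ring, hexp,
      zpow_neg, zpow_natCast]
  have h3 : Complex.exp (-(((ν+1:ℕ)):ℤ) * θ * I) = (E ^ (ν+1:ℕ))⁻¹ := by
    rw [show ((-(((ν+1:ℕ)):ℤ) : ℂ) * θ * I) = ((-((ν:ℤ)+1) : ℤ) : ℂ) * θ * I by push_cast; ring,
      hexp, zpow_neg, show ((ν:ℤ)+1) = ((ν+1:ℕ):ℤ) by push_cast; ring, zpow_natCast]
  have h4 : Complex.exp (-((1-(ν:ℤ))) * θ * I) = E ^ (ν:ℕ) * E⁻¹ := by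
    rw [show ((-(1-(ν:ℤ)) : ℂ) * θ * I) = (((ν:ℤ)-1 : ℤ) : ℂ) * θ * I by push_cast; ring, hexp,
      zpow_sub_one₀ hE0, zpow_natCast]
  have h5 : Complex.exp ((-(ν:ℤ)) * θ * I) = (E ^ (ν:ℕ))⁻¹ := by
    push_cast; exact h2
  have hre : ∀ z : ℂ, ((z.re : ℝ) : ℂ) = (z + (starRingEnd ℂ) z) / 2 := by
    intro z
    have := Complex.add_conj z
    rw [this]; push_cast; ring
  have hbase : (((w * E⁻¹ / r).re - α : ℝ) : ℂ)
      = (2*r:ℂ)⁻¹ * w * E⁻¹ + (2*r:ℂ)⁻¹ * (starRingEnd ℂ) w * E - α := by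
    rw [Complex.ofReal_sub, hre]
    simp only [map_mul, map_div₀, map_inv₀, Complex.conj_ofReal, hEc, inv_inv]
    field_simp
  rw [h1, h2, h3, h4, h5, hbase]
  simp only [map_mul, map_pow, hEc, map_inv₀, inv_inv, inv_pow, pow_succ, mul_inv]
  generalize (E ^ ν)⁻¹ = Q
  ring

theorem stmt_14 (α : ℝ) (hα0 : 0 ≤ α) (hα1 : α < 1)
    (g : ℂ → ℂ) (hg : DifferentiableOn ℂ g (ball (0:ℂ) 1))
    (h0 : g 0 = 0) (h1 : deriv g 0 = 1)
    (hre : ∀ z ∈ ball (0:ℂ) 1, z ≠ 0 → α ≤ (g z / z).re)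
    (c : ℕ → ℂ) (hc : ∀ n, c n = iteratedDeriv n g 0 / (Nat.factorial n)) :
    ∀ m : ℕ, 2 ≤ m → ‖c m‖ ≤ 2 * (1 - α) := by
  intro m hm
  obtain ⟨n, rfl⟩ : ∃ n, m = n + 1 := ⟨m - 1, by omega⟩
  have hn : 1 ≤ n := by omega
  have h2α : (0:ℝ) ≤ 2 * (1 - α) := by nlinarith
  suffices H : ∀ r : ℝ, 0 < r → r < 1 →
      ‖c (n+1)‖ * r ^ (n+1) ≤ 2 * (1 - α) * r by
    have hne : (nhdsWithin (1:ℝ) (Set.Ioo 0 1)).NeBot := by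
      apply mem_closure_iff_nhdsWithin_neBot.1
      rw [closure_Ioo (by norm_num : (0:ℝ) ≠ 1)]
      exact Set.right_mem_Icc.2 (by norm_num)
    have ht : Filter.Tendsto (fun r : ℝ => ‖c (n+1)‖ * r ^ (n+1))
        (nhdsWithin 1 (Set.Ioo 0 1)) (nhds (‖c (n+1)‖)) := by
      have hcont : Continuous fun r : ℝ => ‖c (n+1)‖ * r ^ (n+1) := by fun_prop
      simpa using (hcont.tendsto 1).mono_left nhdsWithin_le_nhds
    have ht2 : Filter.Tendsto (fun r : ℝ => 2 * (1-α) * r)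
        (nhdsWithin 1 (Set.Ioo 0 1)) (nhds (2 * (1-α))) := by
      have hcont : Continuous fun r : ℝ => 2 * (1-α) * r := by fun_prop
      simpa using (hcont.tendsto 1).mono_left nhdsWithin_le_nhds
    exact le_of_tendsto_of_tendsto ht ht2
      (Filter.eventually_of_mem self_mem_nhdsWithin fun r hr => H r hr.1 hr.2)
  intro r hr0 hr1
  have hrC : (r:ℂ) ≠ 0 := Complex.ofReal_ne_zero.2 hr0.ne'
  set r' : NNReal := ⟨(1+r)/2, by linarith⟩ with hr'
  have hr'r : r < (r' : ℝ) := by show r < (1+r)/2; linarith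
  have hr'1 : (r' : ℝ) < 1 := by show (1+r)/2 < 1; linarith
  have hr'pos : 0 < r' := by
    rw [← NNReal.coe_lt_coe]
    simp [hr']; linarith
  have hsub : closedBall (0:ℂ) r' ⊆ ball 0 1 := closedBall_subset_ball hr'1
  have hp := (hg.mono hsub).hasFPowerSeriesOnBall hr'pos
  set p := cauchyPowerSeries g 0 r' with hpdef
  -- coefficients
  have hcoeff : ∀ k, c k = p.coeff k := by
    intro k
    have hfac : ((Nat.factorial k : ℕ) : ℂ) ≠ 0 := by
      exact_mod_cast (Nat.factorial_ne_zero k)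
    have hd := hp.factorial_smul (1:ℂ) k
    rw [← iteratedDeriv_eq_iteratedFDeriv] at hd
    rw [hc k, ← hd, nsmul_eq_mul, mul_div_cancel_left₀ _ hfac]
    rfl
  have hc0 : p.coeff 0 = 0 := by
    have := hcoeff 0
    rw [hc 0, iteratedDeriv_zero, h0] at this
    simpa using this.symm
  have hc1 : p.coeff 1 = 1 := by
    have := hcoeff 1
    rw [hc 1, iteratedDeriv_one, h1] at this
    simpa using this.symm
  -- the boundary function
  set G : ℝ → ℂ := fun θ => g ((r:ℂ) * Complex.exp (θ * I)) with hG
  have hmem1 : ∀ θ : ℝ, (r:ℂ) * Complex.exp (θ * I) ∈ ball (0:ℂ) 1 := by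
    intro θ
    rw [mem_ball_zero_iff]
    simp [map_mul, Complex.norm_exp_ofReal_mul_I,
      abs_of_pos hr0]
    exact hr1
  have hGcont : Continuous G := by
    apply ContinuousOn.comp_continuous hg.continuousOn (by fun_prop) hmem1
  -- J evaluations
  have hJnat : ∀ k0 : ℕ,
      (∫ θ in (0:ℝ)..(2*Real.pi), G θ * Complex.exp (-(k0:ℤ) * θ * I))
        = 2*Real.pi * (p.coeff k0 * r ^ k0) := by
    intro k0
    have h2 : HasSum (fun k : ℕ => if (k:ℤ) = (k0:ℤ) then
        (2*Real.pi : ℂ) * (p.coeff k * r ^ k) else 0)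
        ((2*Real.pi : ℂ) * (p.coeff k0 * r ^ k0)) := by
      have : (fun k : ℕ => if (k:ℤ) = (k0:ℤ) then (2*Real.pi : ℂ) * (p.coeff k * r ^ k) else 0)
          = fun k : ℕ => if k = k0 then (2*Real.pi : ℂ) * (p.coeff k0 * r ^ k0) else 0 := by
        funext k
        by_cases hk : k = k0
        · subst hk; simp
        · simp [hk, fun h => hk (by exact_mod_cast h : k = k0)]
      rw [this]
      exact hasSum_ite_eq k0 _
    exact (hasSum_J hp hr0 hr'r (k0:ℤ)).unique h2
  have hJ0 : (∫ θ in (0:ℝ)..(2*Real.pi), G θ * Complex.exp (-(1-(n:ℤ)) * θ * I)) = 0 := by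
    have h := hasSum_J hp hr0 hr'r (1-(n:ℤ))
    have heq : (fun k : ℕ => if (k:ℤ) = 1-(n:ℤ) then
        (2*Real.pi : ℂ) * (p.coeff k * r ^ k) else 0) = fun _ => (0:ℂ) := by
      funext k
      split_ifs with hk
      · have hk0 : k = 0 := by omega
        subst hk0
        simp [hc0]
      · rfl
    rw [heq] at h
    have h3 := h.unique hasSum_zero
    push_cast at h3
    exact h3
  -- the nonnegative boundary density
  set U : ℝ → ℝ := fun θ => (G θ * Complex.exp (-θ*I) / r).re - α with hU
  have hU0 : ∀ θ, 0 ≤ U θ := by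
    intro θ
    set z : ℂ := (r:ℂ) * Complex.exp (θ * I) with hz
    have hzne : z ≠ 0 := mul_ne_zero hrC (Complex.exp_ne_zero _)
    have he : Complex.exp (-θ*I) * Complex.exp (θ*I) = 1 := by
      rw [← Complex.exp_add, neg_mul, neg_add_cancel, Complex.exp_zero]
    have hquot : G θ * Complex.exp (-θ*I) / r = g z / z := by
      rw [div_eq_div_iff hrC hzne, hz, hG]
      linear_combination g ((r:ℂ) * Complex.exp (θ * I)) * (r:ℂ) * he
    have hge := hre z (hmem1 θ) hzne
    simp only [hU, hquot]
    linarith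
  have hUcont : Continuous U := by
    apply Continuous.sub _ continuous_const
    exact Complex.continuous_re.comp ((hGcont.mul (by fun_prop)).div_const _)
  -- main integral identity
  have hint : ∀ ν : ℕ, (∫ θ in (0:ℝ)..(2*Real.pi), ((U θ : ℝ):ℂ) * Complex.exp (-(ν:ℂ)*θ*I))
      = (2*r:ℂ)⁻¹ * (2*Real.pi * (p.coeff (ν+1) * r ^ (ν+1)))
        + (2*r:ℂ)⁻¹ * (starRingEnd ℂ)
            (∫ θ in (0:ℝ)..(2*Real.pi), G θ * Complex.exp (-(1-(ν:ℤ)) * θ * I))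
        + (-α:ℂ) * (if (-(ν:ℤ)) = 0 then (2*Real.pi:ℂ) else 0) := by
    intro ν
    have hptw : ∀ θ : ℝ, ((U θ : ℝ):ℂ) * Complex.exp (-(ν:ℂ)*θ*I)
        = (2*r:ℂ)⁻¹ * (G θ * Complex.exp (-(((ν+1:ℕ)):ℤ) * θ * I))
          + (2*r:ℂ)⁻¹ * (starRingEnd ℂ) (G θ * Complex.exp (-((1-(ν:ℤ))) * θ * I))
          + (-α:ℂ) * Complex.exp ((-(ν:ℤ)) * θ * I) := by
      intro θ
      simpa only [hU, Complex.ofReal_sub] using pointwise (G θ) hr0.ne' α θ ν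
    have hi1 : IntervalIntegrable
        (fun θ : ℝ => (2*r:ℂ)⁻¹ * (G θ * Complex.exp (-(((ν+1:ℕ)):ℤ) * θ * I)))
        MeasureTheory.volume 0 (2*Real.pi) := by
      apply Continuous.intervalIntegrable
      fun_prop
    have hi2 : IntervalIntegrable
        (fun θ : ℝ => (2*r:ℂ)⁻¹ * (starRingEnd ℂ) (G θ * Complex.exp (-((1-(ν:ℤ))) * θ * I)))
        MeasureTheory.volume 0 (2*Real.pi) := by
      apply Continuous.intervalIntegrable
      exact continuous_const.mul (Complex.continuous_conj.comp (by fun_prop))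
    have hi3 : IntervalIntegrable
        (fun θ : ℝ => (-α:ℂ) * Complex.exp ((-(ν:ℤ)) * θ * I))
        MeasureTheory.volume 0 (2*Real.pi) := by
      apply Continuous.intervalIntegrable
      fun_prop
    rw [intervalIntegral.integral_congr (g := fun θ : ℝ =>
        (2*r:ℂ)⁻¹ * (G θ * Complex.exp (-(((ν+1:ℕ)):ℤ) * θ * I))
          + (2*r:ℂ)⁻¹ * (starRingEnd ℂ) (G θ * Complex.exp (-((1-(ν:ℤ))) * θ * I))
          + (-α:ℂ) * Complex.exp ((-(ν:ℤ)) * θ * I)) (fun θ _ => hptw θ)]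
    have he := exp_int_integral (-(ν:ℤ))
    rw [intervalIntegral.integral_add (hi1.add hi2) hi3,
      intervalIntegral.integral_add hi1 hi2,
      intervalIntegral.integral_const_mul, intervalIntegral.integral_const_mul,
      intervalIntegral.integral_const_mul, _root_.intervalIntegral_conj, hJnat (ν+1)]
    push_cast at he ⊢
    rw [he]
  -- two consequences
  have hintn := hint n
  rw [hJ0, map_zero, mul_zero, add_zero, if_neg (by omega : ¬ (-(n:ℤ)) = 0), mul_zero,
    add_zero] at hintn
  have hint0 := hint 0
  have hsimp0 : ∀ θ : ℝ, ((U θ : ℝ):ℂ) * Complex.exp (-((0:ℕ):ℂ)*θ*I) = ((U θ : ℝ):ℂ) := by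
    intro θ; simp
  rw [intervalIntegral.integral_congr (g := fun θ : ℝ => ((U θ : ℝ):ℂ)) (fun θ _ => hsimp0 θ),
    if_pos (by norm_num)] at hint0
  have hJ1eval : (∫ θ in (0:ℝ)..(2*Real.pi), G θ * Complex.exp (-(1-(((0:ℕ)):ℤ)) * θ * I))
      = 2*Real.pi * (r:ℂ) := by
    have h := hJnat 1
    rw [hc1] at h
    have hfun : Set.EqOn
        (fun θ:ℝ => G θ * Complex.exp (-(1-(((0:ℕ)):ℤ)) * θ * I))
        (fun θ:ℝ => G θ * Complex.exp (-(((1:ℕ):ℤ):ℂ) * θ * I))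
        (Set.uIcc 0 (2*Real.pi)) := fun θ _ => by norm_num
    rw [intervalIntegral.integral_congr hfun, h]
    push_cast; ring
  rw [hJ1eval] at hint0
  have hint0' : (∫ θ in (0:ℝ)..(2*Real.pi), ((U θ : ℝ):ℂ)) = 2*Real.pi*(1-α) := by
    rw [hint0, hc1]
    have : (starRingEnd ℂ) (2*Real.pi * (r:ℂ)) = 2*Real.pi*(r:ℂ) := by
      rw [show ((2:ℂ)*Real.pi*(r:ℂ)) = (((2*Real.pi*r : ℝ)):ℂ) by push_cast; ring,
        Complex.conj_ofReal]
    rw [this]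
    field_simp
    ring
  have hUint : (∫ θ in (0:ℝ)..(2*Real.pi), U θ) = 2*Real.pi*(1-α) := by
    have := hint0'
    rw [intervalIntegral.integral_ofReal] at this
    exact_mod_cast this
  -- norm estimate
  have hnorm : ‖(∫ θ in (0:ℝ)..(2*Real.pi), ((U θ : ℝ):ℂ) * Complex.exp (-(n:ℂ)*θ*I))‖
      ≤ 2*Real.pi*(1-α) := by
    rw [← hUint]
    have hle := intervalIntegral.norm_integral_le_integral_norm
      (f := fun θ : ℝ => ((U θ : ℝ):ℂ) * Complex.exp (-(n:ℂ)*θ*I))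
      (μ := MeasureTheory.volume) (a := 0) (b := 2*Real.pi) (by positivity)
    rw [intervalIntegral.integral_congr (g := U) (fun θ _ => ?_)] at hle
    · exact hle
    · have habs1 : ‖Complex.exp (-(n:ℂ)*θ*I)‖ = 1 := by
        rw [show (-(n:ℂ)*θ*I) = ((-(n*θ):ℝ):ℂ)*I by push_cast; ring]
        exact Complex.norm_exp_ofReal_mul_I _
      rw [norm_mul, Complex.norm_real, Real.norm_eq_abs, habs1,
        mul_one, _root_.abs_of_nonneg (hU0 θ)]
  rw [hintn] at hnorm
  -- conclude
  have habs2 : ‖(2*(r:ℂ))⁻¹ * (2*Real.pi * (p.coeff (n+1) * (r:ℝ) ^ (n+1)))‖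
      = (2*r)⁻¹ * (2*Real.pi * (‖p.coeff (n+1)‖ * r ^ (n+1))) := by
    simp [norm_mul, norm_inv, Complex.norm_real, abs_of_pos hr0,
      abs_of_pos Real.pi_pos, map_pow]
    try ring
  rw [show ((2*r:ℂ))⁻¹ = ((2*(r:ℂ)))⁻¹ by push_cast; ring] at hnorm
  rw [habs2] at hnorm
  have hpi := Real.pi_pos
  have hcm : ‖c (n+1)‖ = ‖p.coeff (n+1)‖ := by rw [hcoeff]
  rw [hcm]
  have hrpow : (0:ℝ) < r ^ (n+1) := by positivity
  have habsnn : 0 ≤ ‖p.coeff (n+1)‖ := norm_nonneg _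
  have h2r : (0:ℝ) < 2*r := by linarith
  have hY := mul_le_mul_of_nonneg_left hnorm h2r.le
  rw [← mul_assoc, mul_inv_cancel₀ h2r.ne', one_mul] at hY
  nlinarith [hY, hpi]
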